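/- Fix p ≥ 1, ε > 0, and let n = ⌈1/ε^p⌉ with ticks t_i = p_min(1+δ)^i where (1+δ)^n = p_max/p_min. Suppose w is a normalized weight on [p_min, p_max] with ∫_{t_i}^{t_{i+1}} w ≤ C^p/n for all i and some constant C. Then for every non-increasing f : [p_min,p_max] → [f_min, f_max], the function g_f built from the n+1 Uniswap v3 basis functions (as conical combination interpolating f at the ticks) satisfies (∫ w(s)|f(s)-g_f(s)|^p ds)^{1/p} ≤ C·ε·(f_max - f_min). -/

import Mathlib

open MeasureTheory Set Finset Real intervalIntegral

lemma aux_two_rpow {p x y : ℝ} (hp : 1 ≤ p) (hx : 0 ≤ x) (hy : 0 ≤ y) :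
    x ^ p + y ^ p ≤ (x + y) ^ p := by
  have h := NNReal.add_rpow_le_rpow_add x.toNNReal y.toNNReal hp
  have h2 := NNReal.coe_le_coe.2 h
  rw [← Real.toNNReal_add hx hy] at h2
  simpa [NNReal.coe_rpow, Real.coe_toNNReal x hx, Real.coe_toNNReal y hy,
    Real.coe_toNNReal (x+y) (by linarith)] using h2

lemma aux_lp {p : ℝ} (hp : 1 ≤ p) (a : ℕ → ℝ) (m : ℕ) (ha : ∀ i < m, 0 ≤ a i) :
    ∑ i ∈ Finset.range m, a i ^ p ≤ (∑ i ∈ Finset.range m, a i) ^ p := by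
  induction m with
  | zero => simp [Real.zero_rpow (by linarith : p ≠ 0)]
  | succ m ih =>
    have ih' := ih (fun i hi => ha i (Nat.lt_succ_of_lt hi))
    rw [Finset.sum_range_succ, Finset.sum_range_succ]
    calc ∑ i ∈ Finset.range m, a i ^ p + a m ^ p
        ≤ (∑ i ∈ Finset.range m, a i) ^ p + a m ^ p := by linarith
      _ ≤ _ := aux_two_rpow hp
          (Finset.sum_nonneg fun i hi => ha i (Nat.lt_succ_of_lt (Finset.mem_range.1 hi)))
          (ha m (Nat.lt_succ_self m))

theorem stmt15 (p ε pmin pmax fmin fmax δ C : ℝ) (n : ℕ)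
    (hp : 1 ≤ p) (hε : 0 < ε) (hn : n = ⌈1 / ε ^ p⌉₊)
    (hpos : 0 < pmin) (hpp : pmin < pmax) (hδ : 0 < δ)
    (hgeo : (1 + δ) ^ n = pmax / pmin) (hC : 0 < C)
    (t : ℕ → ℝ) (htdef : ∀ i, t i = pmin * (1 + δ) ^ i)
    (w : ℝ → ℝ) (hw0 : ∀ x ∈ Icc pmin pmax, 0 ≤ w x)
    (hwint : IntervalIntegrable w volume pmin pmax)
    (hwnorm : ∫ x in pmin..pmax, w x = 1)
    (hwsmall : ∀ i < n, ∫ x in (t i)..(t (i+1)), w x ≤ C ^ p / (n : ℝ))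
    (gb : ℕ → ℝ → ℝ)
    (hgb₁ : ∀ i < n, ∀ x ≤ t i, gb i x = 1 / Real.sqrt (t i) - 1 / Real.sqrt (t (i+1)))
    (hgb₂ : ∀ i < n, ∀ x, t i ≤ x → x ≤ t (i+1) →
      gb i x = 1 / Real.sqrt x - 1 / Real.sqrt (t (i+1)))
    (hgb₃ : ∀ i < n, ∀ x, t (i+1) ≤ x → gb i x = 0)
    (f : ℝ → ℝ) (hanti : AntitoneOn f (Icc pmin pmax))
    (hrange : ∀ x ∈ Icc pmin pmax, f x ∈ Icc fmin fmax)
    (gf : ℝ → ℝ)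
    (hgf : ∀ x, gf x = f pmax * 1 + ∑ i ∈ Finset.range n,
      ((f (t i) - f (t (i+1))) / (1 / Real.sqrt (t i) - 1 / Real.sqrt (t (i+1))))
        * gb i x) :
    (∫ s in pmin..pmax, w s * |f s - gf s| ^ p) ^ (1/p)
      ≤ C * ε * (fmax - fmin) := by
  have hp0 : (0:ℝ) < p := lt_of_lt_of_le one_pos hp
  have h1δ : (1:ℝ) < 1 + δ := by linarith
  have htpos : ∀ i, 0 < t i := by
    intro i; rw [htdef]; positivity
  have htmono : ∀ i j : ℕ, i ≤ j → t i ≤ t j := by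
    intro i j hij
    rw [htdef, htdef]
    exact mul_le_mul_of_nonneg_left (pow_le_pow_right₀ h1δ.le hij) hpos.le
  have htlt : ∀ i, t i < t (i+1) := by
    intro i; rw [htdef, htdef]
    exact mul_lt_mul_of_pos_left (pow_lt_pow_right₀ h1δ (Nat.lt_succ_self i)) hpos
  have ht0 : t 0 = pmin := by simp [htdef]
  have htn : t n = pmax := by
    rw [htdef, hgeo]; field_simp
  have hmem : ∀ i ≤ n, t i ∈ Icc pmin pmax := by
    intro i hi
    exact ⟨ht0 ▸ htmono 0 i (Nat.zero_le _), htn ▸ htmono i n hi⟩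
  have hsubI : ∀ i < n, Icc (t i) (t (i+1)) ⊆ Icc pmin pmax := by
    intro i hi
    exact Icc_subset_Icc (hmem i hi.le).1 (hmem (i+1) hi).2
  have hden : ∀ i : ℕ, 0 < 1 / Real.sqrt (t i) - 1 / Real.sqrt (t (i+1)) := by
    intro i
    have h1 : 0 < Real.sqrt (t i) := Real.sqrt_pos.2 (htpos i)
    have h2 : Real.sqrt (t i) < Real.sqrt (t (i+1)) :=
      Real.sqrt_lt_sqrt (htpos i).le (htlt i)
    have := one_div_lt_one_div_of_lt h1 h2
    linarith
  have hd : ∀ i < n, 0 ≤ f (t i) - f (t (i+1)) := by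
    intro i hi
    exact sub_nonneg.2 (hanti (hmem i hi.le) (hmem (i+1) hi) (htlt i).le)
  set c : ℕ → ℝ := fun j =>
    (f (t j) - f (t (j+1))) / (1 / Real.sqrt (t j) - 1 / Real.sqrt (t (j+1))) with hc
  -- the explicit formula for gf on each interval
  have hgfx : ∀ i < n, ∀ x ∈ Icc (t i) (t (i+1)),
      gf x = f (t (i+1)) + c i * (1 / Real.sqrt x - 1 / Real.sqrt (t (i+1))) := by
    intro i hi x hx
    rw [hgf]
    have hterm : ∀ j ∈ Finset.range n, c j * gb j x =
        if j < i then 0 else if j = i then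
          c i * (1 / Real.sqrt x - 1 / Real.sqrt (t (i+1)))
        else f (t j) - f (t (j+1)) := by
      intro j hj
      rw [Finset.mem_range] at hj
      rcases lt_trichotomy j i with h | h | h
      · rw [if_pos h, hgb₃ j hj x (le_trans (htmono (j+1) i h) hx.1), mul_zero]
      · subst h
        rw [if_neg (lt_irrefl j), if_pos rfl, hgb₂ j hj x hx.1 hx.2]
      · rw [if_neg (not_lt.2 h.le), if_neg h.ne', hgb₁ j hj x (le_trans hx.2 (htmono (i+1) j h))]
        exact div_mul_cancel₀ _ (hden j).ne'
    rw [Finset.sum_congr rfl hterm]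
    have hin : i + 1 ≤ n := hi
    rw [Finset.range_eq_Ico, ← Finset.sum_Ico_consecutive _ (Nat.zero_le (i+1)) hin]
    have hleft : ∑ j ∈ Finset.Ico 0 (i+1), (if j < i then (0:ℝ) else if j = i then
          c i * (1 / Real.sqrt x - 1 / Real.sqrt (t (i+1)))
        else f (t j) - f (t (j+1)))
        = c i * (1 / Real.sqrt x - 1 / Real.sqrt (t (i+1))) := by
      rw [← Finset.range_eq_Ico, Finset.sum_range_succ, if_neg (lt_irrefl i), if_pos rfl,
        Finset.sum_eq_zero, zero_add]
      intro j hj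
      rw [if_pos (Finset.mem_range.1 hj)]
    have hright : ∑ j ∈ Finset.Ico (i+1) n, (if j < i then (0:ℝ) else if j = i then
          c i * (1 / Real.sqrt x - 1 / Real.sqrt (t (i+1)))
        else f (t j) - f (t (j+1)))
        = f (t (i+1)) - f (t n) := by
      rw [Finset.sum_congr rfl (g := fun j => f (t j) - f (t (j+1)))]
      · rw [Finset.sum_Ico_eq_sum_range]
        have hnn : i + 1 + (n - (i+1)) = n := by omega
        calc ∑ k ∈ Finset.range (n - (i + 1)), (f (t (i+1+k)) - f (t (i+1+k+1)))
            = f (t (i+1+0)) - f (t (i+1+(n-(i+1)))) :=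
              Finset.sum_range_sub' (fun k => f (t (i+1+k))) _
          _ = f (t (i+1)) - f (t n) := by rw [hnn]
      · intro j hj
        rw [Finset.mem_Ico] at hj
        rw [if_neg (by omega), if_neg (by omega)]
    rw [hleft, hright, htn]
    ring
  -- pointwise error bound
  have hkey : ∀ i < n, ∀ x ∈ Icc (t i) (t (i+1)),
      |f x - gf x| ≤ f (t i) - f (t (i+1)) := by
    intro i hi x hx
    have hgx := hgfx i hi x hx
    have hxpos : 0 < x := lt_of_lt_of_le (htpos i) hx.1
    have hsx : 0 < Real.sqrt x := Real.sqrt_pos.2 hxpos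
    have hsti : 0 < Real.sqrt (t i) := Real.sqrt_pos.2 (htpos i)
    have hs0 : 0 ≤ 1 / Real.sqrt x - 1 / Real.sqrt (t (i+1)) := by
      have := one_div_le_one_div_of_le hsx (Real.sqrt_le_sqrt hx.2)
      linarith
    have hs1 : 1 / Real.sqrt x - 1 / Real.sqrt (t (i+1))
        ≤ 1 / Real.sqrt (t i) - 1 / Real.sqrt (t (i+1)) := by
      have := one_div_le_one_div_of_le hsti (Real.sqrt_le_sqrt hx.1)
      linarith
    have hc0 : 0 ≤ c i := div_nonneg (hd i hi) (hden i).le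
    have hprod0 : 0 ≤ c i * (1 / Real.sqrt x - 1 / Real.sqrt (t (i+1))) :=
      mul_nonneg hc0 hs0
    have hprod1 : c i * (1 / Real.sqrt x - 1 / Real.sqrt (t (i+1)))
        ≤ f (t i) - f (t (i+1)) := by
      calc c i * (1 / Real.sqrt x - 1 / Real.sqrt (t (i+1)))
          ≤ c i * (1 / Real.sqrt (t i) - 1 / Real.sqrt (t (i+1))) :=
            mul_le_mul_of_nonneg_left hs1 hc0
        _ = f (t i) - f (t (i+1)) := div_mul_cancel₀ _ (hden i).ne'
    have hxm : x ∈ Icc pmin pmax := hsubI i hi hx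
    have hfx1 : f x ≤ f (t i) := hanti (hsubI i hi (left_mem_Icc.2 (htlt i).le)) hxm hx.1
    have hfx2 : f (t (i+1)) ≤ f x := hanti hxm (hsubI i hi (right_mem_Icc.2 (htlt i).le)) hx.2
    rw [abs_le]
    constructor <;> rw [hgx] <;> linarith
  -- integrability on each tick interval
  have hw' : ∀ i < n, IntervalIntegrable w volume (t i) (t (i+1)) := by
    intro i hi
    apply hwint.mono_set
    rw [uIcc_of_le (htlt i).le, uIcc_of_le hpp.le]
    exact hsubI i hi
  have hint : ∀ i < n, IntervalIntegrable (fun s => w s * |f s - gf s| ^ p)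
      volume (t i) (t (i+1)) := by
    intro i hi
    have hab : t i ≤ t (i+1) := (htlt i).le
    have huIcc : uIcc (t i) (t (i+1)) = Icc (t i) (t (i+1)) := uIcc_of_le hab
    have huIoc : Set.uIoc (t i) (t (i+1)) = Ioc (t i) (t (i+1)) := uIoc_of_le hab
    have hf_int : IntervalIntegrable f volume (t i) (t (i+1)) := by
      apply AntitoneOn.intervalIntegrable
      rw [huIcc]; exact hanti.mono (hsubI i hi)
    have hgf_int : IntervalIntegrable gf volume (t i) (t (i+1)) := by
      apply AntitoneOn.intervalIntegrable
      rw [huIcc]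
      intro x hx y hy hxy
      rw [hgfx i hi x hx, hgfx i hi y hy]
      have hsx : 0 < Real.sqrt x := Real.sqrt_pos.2 (lt_of_lt_of_le (htpos i) hx.1)
      have h1 : 1 / Real.sqrt y ≤ 1 / Real.sqrt x :=
        one_div_le_one_div_of_le hsx (Real.sqrt_le_sqrt hxy)
      have hc0 : 0 ≤ c i := div_nonneg (hd i hi) (hden i).le
      have := mul_le_mul_of_nonneg_left (by linarith :
        1 / Real.sqrt y - 1 / Real.sqrt (t (i+1)) ≤ 1 / Real.sqrt x - 1 / Real.sqrt (t (i+1))) hc0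
      linarith
    have hm1 : AEStronglyMeasurable (fun s => f s - gf s)
        (volume.restrict (Set.uIoc (t i) (t (i+1)))) := by
      rw [huIoc]
      exact (hf_int.sub hgf_int).aestronglyMeasurable
    have hm2 : AEStronglyMeasurable (fun s => w s * |f s - gf s| ^ p)
        (volume.restrict (Set.uIoc (t i) (t (i+1)))) := by
      have hww : AEStronglyMeasurable w (volume.restrict (Set.uIoc (t i) (t (i+1)))) :=
        (hw' i hi).def'.aestronglyMeasurable
      have habs : AEMeasurable (fun s => |f s - gf s|)
          (volume.restrict (Set.uIoc (t i) (t (i+1)))) :=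
        continuous_abs.measurable.comp_aemeasurable hm1.aemeasurable
      exact hww.mul ((Real.continuous_rpow_const hp0.le).measurable.comp_aemeasurable
        habs).aestronglyMeasurable
    apply ((hw' i hi).mul_const ((f (t i) - f (t (i+1))) ^ p)).mono_fun hm2
    filter_upwards [ae_restrict_mem measurableSet_uIoc] with x hx
    rw [huIoc] at hx
    have hxm : x ∈ Icc (t i) (t (i+1)) := Ioc_subset_Icc_self hx
    have hwx : 0 ≤ w x := hw0 x (hsubI i hi hxm)
    have hr : |f x - gf x| ^ p ≤ (f (t i) - f (t (i+1))) ^ p :=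
      Real.rpow_le_rpow (abs_nonneg _) (hkey i hi x hxm) hp0.le
    have hr0 : 0 ≤ |f x - gf x| ^ p := Real.rpow_nonneg (abs_nonneg _) p
    calc ‖w x * |f x - gf x| ^ p‖ = w x * |f x - gf x| ^ p := by
          rw [Real.norm_eq_abs, abs_of_nonneg (mul_nonneg hwx hr0)]
      _ ≤ w x * (f (t i) - f (t (i+1))) ^ p := mul_le_mul_of_nonneg_left hr hwx
      _ ≤ ‖w x * (f (t i) - f (t (i+1))) ^ p‖ := le_abs_self _
  -- per-interval integral bound
  have hbound : ∀ i < n, ∫ s in (t i)..(t (i+1)), w s * |f s - gf s| ^ p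
      ≤ (f (t i) - f (t (i+1))) ^ p * (C ^ p / n) := by
    intro i hi
    have hab : t i ≤ t (i+1) := (htlt i).le
    have hdp0 : 0 ≤ (f (t i) - f (t (i+1))) ^ p := Real.rpow_nonneg (hd i hi) p
    calc ∫ s in (t i)..(t (i+1)), w s * |f s - gf s| ^ p
        ≤ ∫ s in (t i)..(t (i+1)), w s * (f (t i) - f (t (i+1))) ^ p := by
          apply intervalIntegral.integral_mono_on hab (hint i hi)
            ((hw' i hi).mul_const _)
          intro x hx
          exact mul_le_mul_of_nonneg_left
            (Real.rpow_le_rpow (abs_nonneg _) (hkey i hi x hx) hp0.le)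
            (hw0 x (hsubI i hi hx))
      _ = (∫ s in (t i)..(t (i+1)), w s) * (f (t i) - f (t (i+1))) ^ p :=
          intervalIntegral.integral_mul_const _ _
      _ ≤ (C ^ p / n) * (f (t i) - f (t (i+1))) ^ p :=
          mul_le_mul_of_nonneg_right (hwsmall i hi) hdp0
      _ = (f (t i) - f (t (i+1))) ^ p * (C ^ p / n) := mul_comm _ _
  -- split the integral
  have hsplit : ∫ s in pmin..pmax, w s * |f s - gf s| ^ p
      = ∑ i ∈ Finset.range n, ∫ s in (t i)..(t (i+1)), w s * |f s - gf s| ^ p := by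
    have := intervalIntegral.sum_integral_adjacent_intervals
      (f := fun s => w s * |f s - gf s| ^ p) (μ := volume) (a := t) (n := n)
      (fun i hi => hint i hi)
    rw [ht0, htn] at this
    exact this.symm
  -- global bounds
  have hεp : 0 < ε ^ p := Real.rpow_pos_of_pos hε p
  have hn1 : 0 < n := by
    rw [hn, Nat.ceil_pos]
    positivity
  have hnp : (0:ℝ) < n := by exact_mod_cast hn1
  have hle : 1 / ε ^ p ≤ (n : ℝ) := by
    rw [hn]; exact Nat.le_ceil _
  have hCn : C ^ p / n ≤ C ^ p * ε ^ p := by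
    rw [div_le_iff₀ hnp]
    have h1 : 1 ≤ (n:ℝ) * ε ^ p := (div_le_iff₀ hεp).mp hle
    nlinarith [Real.rpow_pos_of_pos hC p]
  have hfm1 : f pmin ≤ fmax := (hrange pmin (left_mem_Icc.2 hpp.le)).2
  have hfm2 : fmin ≤ f pmax := (hrange pmax (right_mem_Icc.2 hpp.le)).1
  have hff : fmin ≤ fmax := le_trans hfm2
    (le_trans (hanti (left_mem_Icc.2 hpp.le) (right_mem_Icc.2 hpp.le) hpp.le) hfm1)
  have htel : ∑ i ∈ Finset.range n, (f (t i) - f (t (i+1))) = f (t 0) - f (t n) :=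
    Finset.sum_range_sub' (fun j => f (t j)) n
  have hsum0 : 0 ≤ ∑ i ∈ Finset.range n, (f (t i) - f (t (i+1))) :=
    Finset.sum_nonneg fun i hi => hd i (Finset.mem_range.1 hi)
  have hsumle : ∑ i ∈ Finset.range n, (f (t i) - f (t (i+1))) ≤ fmax - fmin := by
    rw [htel, ht0, htn]; linarith
  have hX : ∫ s in pmin..pmax, w s * |f s - gf s| ^ p
      ≤ (fmax - fmin) ^ p * (C ^ p * ε ^ p) := by
    rw [hsplit]
    calc ∑ i ∈ Finset.range n, ∫ s in (t i)..(t (i+1)), w s * |f s - gf s| ^ p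
        ≤ ∑ i ∈ Finset.range n, (f (t i) - f (t (i+1))) ^ p * (C ^ p / n) :=
          Finset.sum_le_sum fun i hi => hbound i (Finset.mem_range.1 hi)
      _ = (∑ i ∈ Finset.range n, (f (t i) - f (t (i+1))) ^ p) * (C ^ p / n) :=
          (Finset.sum_mul _ _ _).symm
      _ ≤ (∑ i ∈ Finset.range n, (f (t i) - f (t (i+1)))) ^ p * (C ^ p / n) := by
          apply mul_le_mul_of_nonneg_right
          · exact aux_lp hp _ n hd
          · positivity
      _ ≤ (fmax - fmin) ^ p * (C ^ p / n) := by
          apply mul_le_mul_of_nonneg_right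
            (Real.rpow_le_rpow hsum0 hsumle hp0.le) (by positivity)
      _ ≤ (fmax - fmin) ^ p * (C ^ p * ε ^ p) :=
          mul_le_mul_of_nonneg_left hCn (Real.rpow_nonneg (by linarith) p)
  have hX0 : 0 ≤ ∫ s in pmin..pmax, w s * |f s - gf s| ^ p :=
    intervalIntegral.integral_nonneg hpp.le fun u hu =>
      mul_nonneg (hw0 u hu) (Real.rpow_nonneg (abs_nonneg _) p)
  have hY0 : 0 ≤ C * ε * (fmax - fmin) := mul_nonneg (by positivity) (by linarith)
  have hYp : (C * ε * (fmax - fmin)) ^ p = (fmax - fmin) ^ p * (C ^ p * ε ^ p) := by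
    rw [Real.mul_rpow (by positivity) (by linarith), Real.mul_rpow hC.le hε.le]
    ring
  calc (∫ s in pmin..pmax, w s * |f s - gf s| ^ p) ^ (1/p)
      ≤ ((C * ε * (fmax - fmin)) ^ p) ^ (1/p) := by
        apply Real.rpow_le_rpow hX0 _ (by positivity)
        rw [hYp]; exact hX
    _ = C * ε * (fmax - fmin) := by
        rw [← Real.rpow_mul hY0, mul_one_div, div_self hp0.ne', Real.rpow_one]
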